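/- In the two-sided sequential matching model, assume every supplier is easy-to-match, i.e., each demand function Q_j : 2^N → [0,1] is monotone with Q_j(∅) = 0 and Q_j({i}) ≥ 1/2 for all i ∈ N; assume consumers follow MNL models with scores 0 < v_ij < 1; and let K_i ∈ ℤ_+ be cardinality budgets. Let (y*, w*, z*) be an optimal solution of the cardinality-constrained LP relaxation (11) and set x_ij = y*_ij/w*_i. Suppose for each i ∈ N there is a random vector X̂_i ∈ {0,1}^V such that (a) P(X̂_ij = 1) = x_ij for every j ∈ V; (b) Σ_{j∈V} X̂_ij ≤ K_i almost surely; (c) for every j with P(X̂_ij = 1) > 0 and every ℓ ≠ j, P(X̂_iℓ = 1 ∣ X̂_ij = 1) ≤ x_iℓ; and the vectors X̂_1,…,X̂_n are mutually independent. Then the random assortment family S with S_i = {j ∈ V : X̂_ij = 1} satisfies |S_i| ≤ K_i almost surely and E[E[M_S]] ≥ ((1 − 1/e)/4)·max over assortment families S' with |S'_i| ≤ K_i for all i of E[M_{S'}]. -/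

import Mathlib

/-- Expected revenue of the matching when the assortment family is `S`:
`E[M_S] = ∑_j r_j · E[Q_j(A_j^S)]`, where consumer `i` independently selects supplier `j`
with probability `pc i j (S i)`. -/
def expRev {ι κ : Type*} [Fintype ι] [Fintype κ] [DecidableEq ι]
    (pc : ι → κ → Finset κ → ℝ) (Q : κ → Finset ι → ℝ) (r : κ → ℝ)
    (S : ι → Finset κ) : ℝ :=
  ∑ j : κ, r j * ∑ A : Finset ι,
    Q j A * ((∏ i ∈ A, pc i j (S i)) * ∏ i ∈ Aᶜ, (1 - pc i j (S i)))

/-- Multinomial logit choice probabilities with scores `v`. -/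
noncomputable def pcMNL {ι κ : Type*} [DecidableEq κ] (v : ι → κ → ℝ) (i : ι) (j : κ)
    (S : Finset κ) : ℝ :=
  if j ∈ S then v i j / (1 + ∑ ℓ ∈ S, v i ℓ) else 0

-- auxiliary lemmas
section AUX
open Finset

lemma sum_prod_compl' {ι : Type*} [Fintype ι] [DecidableEq ι] (f g : ι → ℝ) :
    ∑ A : Finset ι, (∏ i ∈ A, f i) * ∏ i ∈ Aᶜ, g i = ∏ i : ι, (f i + g i) := by
  rw [Finset.prod_add, Finset.powerset_univ]
  exact Finset.sum_congr rfl fun A _ => by rw [Finset.compl_eq_univ_sdiff]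

/-- Bernoulli-type inequality: `1 - ∑ p ≤ ∏ (1 - p)` for `p ∈ [0,1]`. -/
lemma one_sub_sum_le_prod' {ι : Type*} (s : Finset ι) (p : ι → ℝ)
    (h0 : ∀ i ∈ s, 0 ≤ p i) (h1 : ∀ i ∈ s, p i ≤ 1) :
    1 - ∑ i ∈ s, p i ≤ ∏ i ∈ s, (1 - p i) := by
  classical
  induction s using Finset.cons_induction with
  | empty => simp
  | cons a s ha ih =>
    rw [Finset.prod_cons, Finset.sum_cons]
    have hs0 : (0:ℝ) ≤ ∑ i ∈ s, p i :=
      Finset.sum_nonneg fun i hi => h0 i (Finset.mem_cons_of_mem hi)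
    have hih := ih (fun i hi => h0 i (Finset.mem_cons_of_mem hi))
      (fun i hi => h1 i (Finset.mem_cons_of_mem hi))
    have hpa0 := h0 a (Finset.mem_cons_self a s)
    have hpa1 := h1 a (Finset.mem_cons_self a s)
    nlinarith [mul_le_mul_of_nonneg_left hih (by linarith : (0:ℝ) ≤ 1 - p a)]

lemma prod_one_sub_le_exp' {ι : Type*} (s : Finset ι) (q : ι → ℝ)
    (h1 : ∀ i ∈ s, q i ≤ 1) :
    ∏ i ∈ s, (1 - q i) ≤ Real.exp (-∑ i ∈ s, q i) := by
  have : -∑ i ∈ s, q i = ∑ i ∈ s, (-q i) := by rw [Finset.sum_neg_distrib]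
  rw [this, Real.exp_sum]
  exact Finset.prod_le_prod (fun i hi => by linarith [h1 i hi])
    (fun i hi => by linarith [Real.add_one_le_exp (-q i)])

lemma chord_lemma' (u : ℝ) (hu0 : 0 ≤ u) (hu1 : u ≤ 1) :
    ((1 - (Real.exp 1)⁻¹) / 2) * u ≤ 1 - Real.exp (-(u / 2)) := by
  set a : ℝ := Real.exp (-(1/2)) with ha
  have hconv := convexOn_exp.2 (Set.mem_univ (0:ℝ)) (Set.mem_univ (-(1/2):ℝ))
    (by linarith : (0:ℝ) ≤ 1 - u) hu0 (by ring)
  simp only [smul_eq_mul, mul_zero, zero_add, Real.exp_zero] at hconv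
  have h1 : Real.exp (-(u/2)) ≤ (1 - u) + u * a := by
    have he : u * -(1/2) = -(u/2) := by ring
    rw [he] at hconv; linarith [hconv]
  have ha2 : a ^ 2 = (Real.exp 1)⁻¹ := by
    rw [ha, ← Real.exp_neg, sq, ← Real.exp_add]
    norm_num
  have hapos : 0 < a := Real.exp_pos _
  nlinarith [sq_nonneg (1 - a), mul_nonneg hu0 (sq_nonneg (1-a))]

lemma sum_ite_empty_prod {ι : Type*} [Fintype ι] [DecidableEq ι] (p : ι → ℝ) (c : ℝ) :
    ∑ A : Finset ι, (if A = ∅ then 0 else c) * ((∏ i ∈ A, p i) * ∏ i ∈ Aᶜ, (1 - p i))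
      = c * (1 - ∏ i : ι, (1 - p i)) := by
  have h1 : ∑ A : Finset ι, ((∏ i ∈ A, p i) * ∏ i ∈ Aᶜ, (1 - p i)) = 1 := by
    rw [sum_prod_compl']; simp
  have hterm : ∀ A : Finset ι,
      (if A = ∅ then 0 else c) * ((∏ i ∈ A, p i) * ∏ i ∈ Aᶜ, (1 - p i))
        = c * ((∏ i ∈ A, p i) * ∏ i ∈ Aᶜ, (1 - p i))
          - (if A = ∅ then c * ((∏ i ∈ A, p i) * ∏ i ∈ Aᶜ, (1 - p i)) else 0) := by
    intro A; by_cases h : A = ∅ <;> simp [h]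
  rw [Finset.sum_congr rfl (fun A _ => hterm A), Finset.sum_sub_distrib, ← Finset.mul_sum, h1]
  have h2 : ∑ A : Finset ι,
      (if A = ∅ then c * ((∏ i ∈ A, p i) * ∏ i ∈ Aᶜ, (1 - p i)) else 0)
        = c * ∏ i : ι, (1 - p i) := by
    rw [Finset.sum_ite_eq' Finset.univ (∅ : Finset ι)
      (fun A => c * ((∏ i ∈ A, p i) * ∏ i ∈ Aᶜ, (1 - p i)))]
    simp
  rw [h2]; ring

lemma exp_upper' {ι : Type*} [Fintype ι] [DecidableEq ι] (p : ι → ℝ) (Φ : Finset ι → ℝ)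
    (hp : ∀ i, 0 ≤ p i ∧ p i ≤ 1) (hΦ0 : Φ ∅ = 0) (hΦ1 : ∀ A, Φ A ≤ 1) :
    ∑ A : Finset ι, Φ A * ((∏ i ∈ A, p i) * ∏ i ∈ Aᶜ, (1 - p i))
      ≤ 1 - ∏ i : ι, (1 - p i) := by
  have hP : ∀ A : Finset ι, 0 ≤ (∏ i ∈ A, p i) * ∏ i ∈ Aᶜ, (1 - p i) := fun A =>
    mul_nonneg (Finset.prod_nonneg fun i _ => (hp i).1)
      (Finset.prod_nonneg fun i _ => by linarith [(hp i).2])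
  calc ∑ A : Finset ι, Φ A * ((∏ i ∈ A, p i) * ∏ i ∈ Aᶜ, (1 - p i))
      ≤ ∑ A : Finset ι, (if A = ∅ then 0 else 1) *
          ((∏ i ∈ A, p i) * ∏ i ∈ Aᶜ, (1 - p i)) := by
        refine Finset.sum_le_sum fun A _ => mul_le_mul_of_nonneg_right ?_ (hP A)
        by_cases h : A = ∅
        · simp [h, hΦ0]
        · simp [h, hΦ1 A]
    _ = 1 * (1 - ∏ i : ι, (1 - p i)) := sum_ite_empty_prod p 1
    _ = 1 - ∏ i : ι, (1 - p i) := one_mul _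

lemma exp_lower' {ι : Type*} [Fintype ι] [DecidableEq ι] (p : ι → ℝ) (Φ : Finset ι → ℝ)
    (hp : ∀ i, 0 ≤ p i ∧ p i ≤ 1) (hΦnn : 0 ≤ Φ ∅)
    (hΦh : ∀ A : Finset ι, A.Nonempty → 1/2 ≤ Φ A) :
    (1/2) * (1 - ∏ i : ι, (1 - p i))
      ≤ ∑ A : Finset ι, Φ A * ((∏ i ∈ A, p i) * ∏ i ∈ Aᶜ, (1 - p i)) := by
  have hP : ∀ A : Finset ι, 0 ≤ (∏ i ∈ A, p i) * ∏ i ∈ Aᶜ, (1 - p i) := fun A =>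
    mul_nonneg (Finset.prod_nonneg fun i _ => (hp i).1)
      (Finset.prod_nonneg fun i _ => by linarith [(hp i).2])
  calc (1/2) * (1 - ∏ i : ι, (1 - p i))
      = ∑ A : Finset ι, (if A = ∅ then 0 else 1/2) *
          ((∏ i ∈ A, p i) * ∏ i ∈ Aᶜ, (1 - p i)) := (sum_ite_empty_prod p (1/2)).symm
    _ ≤ ∑ A : Finset ι, Φ A * ((∏ i ∈ A, p i) * ∏ i ∈ Aᶜ, (1 - p i)) := by
        refine Finset.sum_le_sum fun A _ => mul_le_mul_of_nonneg_right ?_ (hP A)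
        by_cases h : A = ∅
        · simp [h, hΦnn]
        · rw [if_neg h]; exact hΦh A (Finset.nonempty_iff_ne_empty.mpr h)

lemma consumer_bound' {κ : Type*} [Fintype κ] [DecidableEq κ]
    (m : Finset κ → ℝ) (hm0 : ∀ T, 0 ≤ m T)
    (vi : κ → ℝ) (hvi : ∀ ℓ, 0 < vi ℓ ∧ vi ℓ < 1)
    (x : κ → ℝ) (hx : ∀ ℓ, 0 ≤ x ℓ)
    (w : ℝ) (hwpos : 0 < w)
    (hweq : w * (1 + ∑ ℓ : κ, vi ℓ * x ℓ) = 1)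
    (j : κ)
    (hmarg : ∀ ℓ : κ, (∑ T : Finset κ, if ℓ ∈ T then m T else 0) = x ℓ)
    (hneg : 0 < x j → ∀ ℓ : κ, ℓ ≠ j →
      (∑ T : Finset κ, if ℓ ∈ T ∧ j ∈ T then m T else 0) ≤ x ℓ * x j) :
    (1/2) * (vi j * (x j * w)) ≤
      ∑ T : Finset κ, m T * (if j ∈ T then vi j / (1 + ∑ ℓ ∈ T, vi ℓ) else 0) := by
  classical
  set D : Finset (Finset κ) := Finset.univ.filter (fun T => j ∈ T) with hD
  have hsT : ∀ T : Finset κ, (0:ℝ) ≤ ∑ ℓ ∈ T, vi ℓ := fun T =>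
    Finset.sum_nonneg fun ℓ _ => (hvi ℓ).1.le
  have hsTpos : ∀ T : Finset κ, (0:ℝ) < 1 + ∑ ℓ ∈ T, vi ℓ := fun T => by linarith [hsT T]
  -- rewrite q as a sum over D
  have hq : ∑ T : Finset κ, m T * (if j ∈ T then vi j / (1 + ∑ ℓ ∈ T, vi ℓ) else 0)
      = ∑ T ∈ D, m T * (vi j / (1 + ∑ ℓ ∈ T, vi ℓ)) := by
    rw [hD, Finset.sum_filter]
    exact Finset.sum_congr rfl fun T _ => by by_cases h : j ∈ T <;> simp [h]
  have hX : ∑ T ∈ D, m T = x j := by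
    rw [← hmarg j, hD, Finset.sum_filter]
  rcases le_or_gt (x j) 0 with hx0 | hx0
  · have hxj : x j = 0 := le_antisymm hx0 (hx j)
    rw [hxj, hq]
    have : (0:ℝ) ≤ ∑ T ∈ D, m T * (vi j / (1 + ∑ ℓ ∈ T, vi ℓ)) :=
      Finset.sum_nonneg fun T _ => mul_nonneg (hm0 T)
        (div_nonneg (hvi j).1.le (hsTpos T).le)
    linarith
  -- main case : x j > 0
  set Sg : ℝ := ∑ T ∈ D, m T / (1 + ∑ ℓ ∈ T, vi ℓ) with hSg
  set B : ℝ := ∑ T ∈ D, m T * (1 + ∑ ℓ ∈ T, vi ℓ) with hB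
  have hSgnn : 0 ≤ Sg :=
    Finset.sum_nonneg fun T _ => div_nonneg (hm0 T) (hsTpos T).le
  -- Cauchy-Schwarz
  have hCS : (x j) ^ 2 ≤ B * Sg := by
    have := Finset.sum_mul_sq_le_sq_mul_sq D
      (fun T => Real.sqrt (m T * (1 + ∑ ℓ ∈ T, vi ℓ)))
      (fun T => Real.sqrt (m T / (1 + ∑ ℓ ∈ T, vi ℓ)))
    have h1 : ∀ T ∈ D, Real.sqrt (m T * (1 + ∑ ℓ ∈ T, vi ℓ)) *
        Real.sqrt (m T / (1 + ∑ ℓ ∈ T, vi ℓ)) = m T := by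
      intro T _
      rw [← Real.sqrt_mul (mul_nonneg (hm0 T) (hsTpos T).le)]
      have : m T * (1 + ∑ ℓ ∈ T, vi ℓ) * (m T / (1 + ∑ ℓ ∈ T, vi ℓ)) = m T ^ 2 := by
        field_simp [(hsTpos T).ne']
      rw [this, Real.sqrt_sq (hm0 T)]
    have h2 : ∀ T ∈ D, Real.sqrt (m T * (1 + ∑ ℓ ∈ T, vi ℓ)) ^ 2
        = m T * (1 + ∑ ℓ ∈ T, vi ℓ) := fun T _ =>
      Real.sq_sqrt (mul_nonneg (hm0 T) (hsTpos T).le)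
    have h3 : ∀ T ∈ D, Real.sqrt (m T / (1 + ∑ ℓ ∈ T, vi ℓ)) ^ 2
        = m T / (1 + ∑ ℓ ∈ T, vi ℓ) := fun T _ =>
      Real.sq_sqrt (div_nonneg (hm0 T) (hsTpos T).le)
    rw [Finset.sum_congr rfl h1, Finset.sum_congr rfl h2, Finset.sum_congr rfl h3] at this
    rw [hX] at this
    exact this
  -- bound B
  set sbar : ℝ := ∑ ℓ : κ, vi ℓ * x ℓ with hsbar
  have hsbarnn : 0 ≤ sbar := Finset.sum_nonneg fun ℓ _ => mul_nonneg (hvi ℓ).1.le (hx ℓ)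
  have hC : ∀ ℓ : κ, (∑ T ∈ D, if ℓ ∈ T then m T else 0)
      = ∑ T : Finset κ, if ℓ ∈ T ∧ j ∈ T then m T else 0 := by
    intro ℓ
    rw [hD, Finset.sum_filter]
    exact Finset.sum_congr rfl fun T _ => by
      by_cases h1 : j ∈ T <;> by_cases h2 : ℓ ∈ T <;> simp [h1, h2]
  have hBsplit : B = x j + ∑ ℓ : κ, vi ℓ * (∑ T ∈ D, if ℓ ∈ T then m T else 0) := by
    rw [hB]
    have : ∀ T ∈ D, m T * (1 + ∑ ℓ ∈ T, vi ℓ)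
        = m T + ∑ ℓ : κ, (if ℓ ∈ T then m T * vi ℓ else 0) := by
      intro T _
      rw [mul_add, mul_one, Finset.mul_sum, ← Finset.sum_filter]
      congr 1
      rw [Finset.filter_mem_eq_inter, Finset.univ_inter]
    rw [Finset.sum_congr rfl this, Finset.sum_add_distrib, hX, Finset.sum_comm]
    congr 1
    refine Finset.sum_congr rfl fun ℓ _ => ?_
    rw [Finset.mul_sum]
    exact Finset.sum_congr rfl fun T _ => by by_cases h : ℓ ∈ T <;> simp [h, mul_comm]
  have hBle : B ≤ x j * (2 + sbar) := by
    have hbound : ∀ ℓ : κ, vi ℓ * (∑ T ∈ D, if ℓ ∈ T then m T else 0)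
        ≤ vi ℓ * (if ℓ = j then x j else x ℓ * x j) := by
      intro ℓ
      refine mul_le_mul_of_nonneg_left ?_ (hvi ℓ).1.le
      by_cases h : ℓ = j
      · subst h
        rw [if_pos rfl, hC]
        have : ∀ T : Finset κ, (if ℓ ∈ T ∧ ℓ ∈ T then m T else 0)
            = (if ℓ ∈ T then m T else 0) := fun T => by by_cases h : ℓ ∈ T <;> simp [h]
        rw [Finset.sum_congr rfl fun T _ => this T, hmarg]
      · rw [if_neg h, hC]
        exact hneg hx0 ℓ h
    have h1 : B ≤ x j + ∑ ℓ : κ, vi ℓ * (if ℓ = j then x j else x ℓ * x j) := by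
      rw [hBsplit]
      exact add_le_add_right (Finset.sum_le_sum fun ℓ _ => hbound ℓ) _
    have h2 : ∑ ℓ : κ, vi ℓ * (if ℓ = j then x j else x ℓ * x j)
        = sbar * x j + vi j * x j - vi j * x j * x j := by
      have : ∀ ℓ : κ, vi ℓ * (if ℓ = j then x j else x ℓ * x j)
          = vi ℓ * x ℓ * x j + (if ℓ = j then vi j * x j - vi j * x j * x j else 0) := by
        intro ℓ
        by_cases h : ℓ = j
        · subst h; simp only [eq_self_iff_true, if_true]; ring
        · simp only [if_neg h]; ring
      rw [Finset.sum_congr rfl fun ℓ _ => this ℓ, Finset.sum_add_distrib,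
        Finset.sum_ite_eq' Finset.univ j, if_pos (Finset.mem_univ j), ← Finset.sum_mul]
      rw [← hsbar]
      ring
    have hvj1 := (hvi j).2
    have hvj0 := (hvi j).1
    have hxj0 := hx j
    nlinarith [mul_nonneg hvj0.le (mul_nonneg hxj0 hxj0)]
  have hBpos : 0 < B := by
    have : x j ≤ B := by
      rw [← hX, hB]
      refine Finset.sum_le_sum fun T _ => ?_
      nlinarith [hm0 T, hsT T]
    linarith
  -- conclude
  have hw1 : w ≤ 1 := by nlinarith
  have hSgge : x j * w / 2 ≤ Sg := by
    have key : x j ≤ (2 + sbar) * Sg := by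
      have := mul_le_mul_of_nonneg_right hBle hSgnn
      nlinarith
    nlinarith
  have hqv : ∑ T ∈ D, m T * (vi j / (1 + ∑ ℓ ∈ T, vi ℓ)) = vi j * Sg := by
    rw [hSg, Finset.mul_sum]
    exact Finset.sum_congr rfl fun T _ => by ring
  rw [hq, hqv]
  nlinarith [mul_le_mul_of_nonneg_left hSgge (hvi j).1.le]


end AUX

/-- **Theorem 3.8.** With easy-to-match suppliers, MNL consumers with
scores `v_{ij} < 1`, and cardinality budgets `K_i`: rounding an optimal solution of the
cardinality-constrained LP relaxation (11) by any per-consumer dependent rounding scheme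
(mutually independent across consumers) with correct marginals, almost-sure budget
feasibility, and negative correlation yields a random assortment family that is feasible
almost surely and whose expected revenue is at least `((1 − 1/e)/4)·OPT`. -/
theorem mnl_cardinality_approximation
    {ι κ : Type*} [Fintype ι] [Fintype κ] [DecidableEq ι] [DecidableEq κ]
    (v : ι → κ → ℝ) (hv : ∀ i j, 0 < v i j ∧ v i j < 1)
    (Q : κ → Finset ι → ℝ)
    (hQrange : ∀ j A, Q j A ∈ Set.Icc (0 : ℝ) 1)
    (hQ0 : ∀ j, Q j ∅ = 0)
    (hQmono : ∀ j (A B : Finset ι), A ⊆ B → Q j A ≤ Q j B)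
    (heasy : ∀ (j : κ) (i : ι), 1 / 2 ≤ Q j {i})
    (r : κ → ℝ) (hr : ∀ j, 0 ≤ r j)
    (K : ι → ℕ)
    (ystar : ι → κ → ℝ) (wstar : ι → ℝ) (zstar : κ → ℝ)
    -- `(ystar, wstar, zstar)` is feasible for LP (11)
    (hz1 : ∀ j, zstar j ≤ 1)
    (hz2 : ∀ j, zstar j ≤ ∑ i : ι, v i j * ystar i j)
    (hw : ∀ i, wstar i + ∑ j : κ, v i j * ystar i j = 1)
    (hK : ∀ i, ∑ j : κ, ystar i j ≤ (K i : ℝ) * wstar i)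
    (hybounds : ∀ i j, 0 ≤ ystar i j ∧ ystar i j ≤ wstar i)
    -- and optimal for LP (11)
    (hopt : ∀ (y : ι → κ → ℝ) (w : ι → ℝ) (z : κ → ℝ),
      (∀ j, z j ≤ 1) →
      (∀ j, z j ≤ ∑ i : ι, v i j * y i j) →
      (∀ i, w i + ∑ j : κ, v i j * y i j = 1) →
      (∀ i, ∑ j : κ, y i j ≤ (K i : ℝ) * w i) →
      (∀ i j, 0 ≤ y i j ∧ y i j ≤ w i) →
      ∑ j : κ, r j * z j ≤ ∑ j : κ, r j * zstar j)
    -- per-consumer rounding distributions `μ i` (the random menu of consumer `i`),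
    -- mutually independent across consumers
    (μ : ι → PMF (Finset κ))
    -- (a) marginals: `P(X̂_{ij} = 1) = x_{ij} = ystar_{ij} / wstar_i`
    (hmarg : ∀ (i : ι) (j : κ),
      (∑ T : Finset κ, if j ∈ T then ((μ i) T).toReal else 0) = ystar i j / wstar i)
    -- (b) budget feasibility almost surely
    (hbudget : ∀ i : ι, ∀ T ∈ (μ i).support, T.card ≤ K i)
    -- (c) negative correlation
    (hnegcor : ∀ (i : ι) (j : κ),
      (0 < ∑ T : Finset κ, if j ∈ T then ((μ i) T).toReal else 0) →
      ∀ ℓ : κ, ℓ ≠ j →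
        (∑ T : Finset κ, if ℓ ∈ T ∧ j ∈ T then ((μ i) T).toReal else 0) ≤
          (ystar i ℓ / wstar i) *
            ∑ T : Finset κ, if j ∈ T then ((μ i) T).toReal else 0) :
    -- the random assortment family is feasible almost surely, and its expected revenue
    -- is at least `((1 − 1/e)/4)` times the optimum among feasible assortment families
    (∀ T : ι → Finset κ, (∀ i, T i ∈ (μ i).support) → ∀ i, (T i).card ≤ K i) ∧
    (∀ S' : ι → Finset κ, (∀ i, (S' i).card ≤ K i) →
      ((1 - (Real.exp 1)⁻¹) / 4) * expRev (pcMNL v) Q r S' ≤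
        ∑ T : ι → Finset κ,
          (∏ i : ι, ((μ i) (T i)).toReal) * expRev (pcMNL v) Q r T) := by
  classical
  constructor
  · exact fun T hT i => hbudget i (T i) (hT i)
  intro S' hS'
  -- positivity of wstar
  have hwpos : ∀ i, 0 < wstar i := by
    intro i
    by_contra h
    push_neg at h
    have hy0 : ∀ j, ystar i j = 0 := fun j =>
      le_antisymm (le_trans (hybounds i j).2 h) (hybounds i j).1
    have h1 := hw i
    simp only [hy0, mul_zero, Finset.sum_const_zero, add_zero] at h1
    linarith
  -- MNL probability facts
  have hpcd : ∀ (i : ι) (S : Finset κ), (0:ℝ) < 1 + ∑ ℓ ∈ S, v i ℓ := by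
    intro i S
    have : (0:ℝ) ≤ ∑ ℓ ∈ S, v i ℓ := Finset.sum_nonneg fun ℓ _ => (hv i ℓ).1.le
    linarith
  have hpc0 : ∀ (i : ι) (j : κ) (S : Finset κ), 0 ≤ pcMNL v i j S := by
    intro i j S
    unfold pcMNL
    split_ifs
    · exact div_nonneg (hv i j).1.le (hpcd i S).le
    · exact le_refl 0
  have hpc1 : ∀ (i : ι) (j : κ) (S : Finset κ), pcMNL v i j S ≤ 1 := by
    intro i j S
    unfold pcMNL
    split_ifs with h
    · rw [div_le_one (hpcd i S)]
      have : v i j ≤ ∑ ℓ ∈ S, v i ℓ :=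
        Finset.single_le_sum (fun ℓ _ => (hv i ℓ).1.le) h
      linarith
    · norm_num
  have hc4 : (0:ℝ) ≤ (1 - (Real.exp 1)⁻¹) / 4 := by
    have h2 : (2:ℝ) ≤ Real.exp 1 := by linarith [Real.add_one_le_exp 1]
    have h3 : (Real.exp 1)⁻¹ ≤ 2⁻¹ := by
      apply inv_anti₀ (by norm_num) h2
    have h4 : (0:ℝ) < (Real.exp 1)⁻¹ := inv_pos.mpr (by linarith)
    norm_num at h3 ⊢
    linarith
  ----------------------------------------------------------------
  -- STEP A : expRev S' ≤ ∑ j, r j * zstar j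
  ----------------------------------------------------------------
  set w' : ι → ℝ := fun i => (1 + ∑ ℓ ∈ S' i, v i ℓ)⁻¹ with hw'def
  set y' : ι → κ → ℝ := fun i j => if j ∈ S' i then w' i else 0 with hy'def
  have hw'pos : ∀ i, 0 < w' i := fun i => inv_pos.mpr (hpcd i (S' i))
  have hvy' : ∀ i j, v i j * y' i j = pcMNL v i j (S' i) := by
    intro i j
    by_cases h : j ∈ S' i <;> simp [hy'def, hw'def, pcMNL, h, div_eq_mul_inv]
  have hsum_vy' : ∀ i, ∑ j : κ, v i j * y' i j = (∑ j ∈ S' i, v i j) * w' i := by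
    intro i
    have h1 : ∀ j : κ, v i j * y' i j = (if j ∈ S' i then v i j * w' i else 0) := by
      intro j; by_cases h : j ∈ S' i <;> simp [hy'def, h]
    rw [Finset.sum_congr rfl fun j _ => h1 j, ← Finset.sum_filter,
      Finset.filter_mem_eq_inter, Finset.univ_inter, ← Finset.sum_mul]
  have hc3 : ∀ i, w' i + ∑ j : κ, v i j * y' i j = 1 := by
    intro i
    have hne := (hpcd i (S' i)).ne'
    rw [hsum_vy' i]
    show (1 + ∑ ℓ ∈ S' i, v i ℓ)⁻¹ + (∑ j ∈ S' i, v i j) * (1 + ∑ ℓ ∈ S' i, v i ℓ)⁻¹ = 1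
    field_simp
  have hcK : ∀ i, ∑ j : κ, y' i j ≤ (K i : ℝ) * w' i := by
    intro i
    have h1 : ∑ j : κ, y' i j = ((S' i).card : ℝ) * w' i := by
      rw [hy'def, ← Finset.sum_filter, Finset.filter_mem_eq_inter, Finset.univ_inter,
        Finset.sum_const, nsmul_eq_mul]
    rw [h1]
    exact mul_le_mul_of_nonneg_right (by exact_mod_cast hS' i) (hw'pos i).le
  have hcb : ∀ i j, 0 ≤ y' i j ∧ y' i j ≤ w' i := by
    intro i j
    by_cases h : j ∈ S' i <;> simp [hy'def, h, (hw'pos i).le]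
  have hAopt : ∑ j : κ, r j * min 1 (∑ i : ι, v i j * y' i j) ≤ ∑ j : κ, r j * zstar j :=
    hopt y' w' (fun j => min 1 (∑ i : ι, v i j * y' i j))
      (fun j => min_le_left _ _) (fun j => min_le_right _ _) hc3 hcK hcb
  have hA : expRev (pcMNL v) Q r S' ≤ ∑ j : κ, r j * zstar j := by
    refine le_trans ?_ hAopt
    unfold expRev
    refine Finset.sum_le_sum fun j _ => mul_le_mul_of_nonneg_left ?_ (hr j)
    have hup := exp_upper' (fun i => pcMNL v i j (S' i)) (Q j)
      (fun i => ⟨hpc0 i j (S' i), hpc1 i j (S' i)⟩) (hQ0 j) (fun A => (hQrange j A).2)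
    rw [le_min_iff]
    constructor
    · have hp : (0:ℝ) ≤ ∏ i : ι, (1 - pcMNL v i j (S' i)) :=
        Finset.prod_nonneg fun i _ => by linarith [hpc1 i j (S' i)]
      linarith
    · have hb := one_sub_sum_le_prod' Finset.univ (fun i => pcMNL v i j (S' i))
        (fun i _ => hpc0 i j (S' i)) (fun i _ => hpc1 i j (S' i))
      have : ∑ i : ι, v i j * y' i j = ∑ i : ι, pcMNL v i j (S' i) :=
        Finset.sum_congr rfl fun i _ => hvy' i j
      rw [this]
      linarith
  ----------------------------------------------------------------
  -- STEP B : lower bound on the rounded revenue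
  ----------------------------------------------------------------
  set m : ι → Finset κ → ℝ := fun i T => ((μ i) T).toReal with hmdef
  have hm0 : ∀ i T, 0 ≤ m i T := fun i T => ENNReal.toReal_nonneg
  have hmsum : ∀ i, ∑ T : Finset κ, m i T = 1 := by
    intro i
    have h := (μ i).tsum_coe
    rw [tsum_fintype] at h
    have h2 := ENNReal.toReal_sum (s := (Finset.univ : Finset (Finset κ)))
      (f := fun T => (μ i) T) (fun T _ => PMF.apply_ne_top _ _)
    rw [h] at h2
    simpa [hmdef] using h2.symm
  set x : ι → κ → ℝ := fun i j => ystar i j / wstar i with hxdef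
  have hxnn : ∀ i j, 0 ≤ x i j := fun i j =>
    div_nonneg (hybounds i j).1 (hwpos i).le
  have hyx : ∀ i j, ystar i j = x i j * wstar i := fun i j =>
    (div_mul_cancel₀ (ystar i j) (hwpos i).ne').symm
  have hweq : ∀ i, wstar i * (1 + ∑ j : κ, v i j * x i j) = 1 := by
    intro i
    have h1 := hw i
    have h2 : ∑ j : κ, v i j * ystar i j = wstar i * ∑ j : κ, v i j * x i j := by
      rw [Finset.mul_sum]
      exact Finset.sum_congr rfl fun j _ => by rw [hyx i j]; ring
    rw [h2] at h1
    linarith [h1]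
  set q : ι → κ → ℝ := fun i j => ∑ T : Finset κ, m i T * pcMNL v i j T with hqdef
  have hq0 : ∀ i j, 0 ≤ q i j := fun i j =>
    Finset.sum_nonneg fun T _ => mul_nonneg (hm0 i T) (hpc0 i j T)
  have hq1 : ∀ i j, q i j ≤ 1 := by
    intro i j
    calc q i j ≤ ∑ T : Finset κ, m i T * 1 :=
          Finset.sum_le_sum fun T _ =>
            mul_le_mul_of_nonneg_left (hpc1 i j T) (hm0 i T)
      _ = 1 := by simp only [mul_one]; exact hmsum i
  have hqge : ∀ i j, (1/2) * (v i j * ystar i j) ≤ q i j := by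
    intro i j
    have hb := consumer_bound' (m i) (hm0 i) (v i) (hv i) (x i) (hxnn i)
      (wstar i) (hwpos i) (hweq i) j (fun ℓ => hmarg i ℓ)
      (fun hpos ℓ hne => by
        have hs := hmarg i j
        have hc := hnegcor i j (by rw [hs]; exact hpos) ℓ hne
        rwa [hs] at hc)
    have heq : ∑ T : Finset κ, m i T *
        (if j ∈ T then v i j / (1 + ∑ ℓ ∈ T, v i ℓ) else 0) = q i j := by
      rw [hqdef]
      exact Finset.sum_congr rfl fun T _ => by rw [pcMNL]
    rw [heq] at hb
    rw [hyx i j]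
    exact hb
  -- per-supplier lower bound
  have hGj : ∀ j : κ, ((1 - (Real.exp 1)⁻¹) / 4) * zstar j ≤
      ∑ T : ι → Finset κ, (∏ i : ι, m i (T i)) *
        (∑ A : Finset ι, Q j A *
          ((∏ i ∈ A, pcMNL v i j (T i)) * ∏ i ∈ Aᶜ, (1 - pcMNL v i j (T i)))) := by
    intro j
    have hinner : ∀ T : ι → Finset κ,
        (1/2) * (1 - ∏ i : ι, (1 - pcMNL v i j (T i))) ≤
          ∑ A : Finset ι, Q j A *
            ((∏ i ∈ A, pcMNL v i j (T i)) * ∏ i ∈ Aᶜ, (1 - pcMNL v i j (T i))) := by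
      intro T
      refine exp_lower' _ (Q j) (fun i => ⟨hpc0 i j (T i), hpc1 i j (T i)⟩)
        (hQrange j ∅).1 (fun A hA => ?_)
      obtain ⟨i, hi⟩ := hA
      exact le_trans (heasy j i)
        (hQmono j {i} A (Finset.singleton_subset_iff.mpr hi))
    have hprodnn : ∀ T : ι → Finset κ, 0 ≤ ∏ i : ι, m i (T i) :=
      fun T => Finset.prod_nonneg fun i _ => hm0 i (T i)
    have hstep1 : ∑ T : ι → Finset κ, (∏ i : ι, m i (T i)) *
        ((1/2) * (1 - ∏ i : ι, (1 - pcMNL v i j (T i)))) ≤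
        ∑ T : ι → Finset κ, (∏ i : ι, m i (T i)) *
          (∑ A : Finset ι, Q j A *
            ((∏ i ∈ A, pcMNL v i j (T i)) * ∏ i ∈ Aᶜ, (1 - pcMNL v i j (T i)))) :=
      Finset.sum_le_sum fun T _ =>
        mul_le_mul_of_nonneg_left (hinner T) (hprodnn T)
    have htot : ∑ T : ι → Finset κ, ∏ i : ι, m i (T i) = 1 := by
      rw [← Fintype.piFinset_univ, ← Finset.prod_univ_sum]
      exact Finset.prod_eq_one fun i _ => hmsum i
    have hfac : ∑ T : ι → Finset κ,
        ∏ i : ι, (m i (T i) * (1 - pcMNL v i j (T i))) = ∏ i : ι, (1 - q i j) := by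
      have hps := Finset.prod_univ_sum (fun _ : ι => (Finset.univ : Finset (Finset κ)))
        (fun i Ti => m i Ti * (1 - pcMNL v i j Ti))
      rw [Fintype.piFinset_univ] at hps
      rw [← hps]
      refine Finset.prod_congr rfl fun i _ => ?_
      have h5 : ∑ Ti : Finset κ, m i Ti * (1 - pcMNL v i j Ti)
          = (∑ Ti : Finset κ, m i Ti) - ∑ Ti : Finset κ, m i Ti * pcMNL v i j Ti := by
        rw [← Finset.sum_sub_distrib]
        exact Finset.sum_congr rfl fun Ti _ => by ring
      rw [h5, hmsum i, hqdef]
    have hlhs : ∑ T : ι → Finset κ, (∏ i : ι, m i (T i)) *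
        ((1/2) * (1 - ∏ i : ι, (1 - pcMNL v i j (T i)))) =
        (1/2) * (1 - ∏ i : ι, (1 - q i j)) := by
      have hterm : ∀ T : ι → Finset κ, (∏ i : ι, m i (T i)) *
          ((1/2) * (1 - ∏ i : ι, (1 - pcMNL v i j (T i)))) =
          (1/2) * ((∏ i : ι, m i (T i)) -
            ∏ i : ι, (m i (T i) * (1 - pcMNL v i j (T i)))) := by
        intro T
        rw [Finset.prod_mul_distrib]
        ring
      rw [Finset.sum_congr rfl fun T _ => hterm T, ← Finset.mul_sum,
        Finset.sum_sub_distrib, htot, hfac]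
    -- analytic chain
    set u : ℝ := max (zstar j) 0 with hudef
    have hu0 : 0 ≤ u := le_max_right _ _
    have hu1 : u ≤ 1 := max_le (hz1 j) zero_le_one
    have hvynn : (0:ℝ) ≤ ∑ i : ι, v i j * ystar i j :=
      Finset.sum_nonneg fun i _ => mul_nonneg (hv i j).1.le (hybounds i j).1
    have huvy : u ≤ ∑ i : ι, v i j * ystar i j := max_le (hz2 j) hvynn
    have hsumq : u / 2 ≤ ∑ i : ι, q i j := by
      have h1 : ∑ i : ι, (1/2) * (v i j * ystar i j) ≤ ∑ i : ι, q i j :=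
        Finset.sum_le_sum fun i _ => hqge i j
      rw [← Finset.mul_sum] at h1
      linarith
    have hchain1 : ∏ i : ι, (1 - q i j) ≤ Real.exp (-(u/2)) := by
      refine le_trans (prod_one_sub_le_exp' Finset.univ (fun i => q i j)
        (fun i _ => hq1 i j)) ?_
      exact Real.exp_le_exp.mpr (by linarith)
    have hchord := chord_lemma' u hu0 hu1
    have hfinal : ((1 - (Real.exp 1)⁻¹) / 4) * zstar j ≤
        (1/2) * (1 - ∏ i : ι, (1 - q i j)) := by
      have h1 : ((1 - (Real.exp 1)⁻¹) / 4) * zstar j ≤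
          ((1 - (Real.exp 1)⁻¹) / 4) * u :=
        mul_le_mul_of_nonneg_left (le_max_left _ _) hc4
      nlinarith
    calc ((1 - (Real.exp 1)⁻¹) / 4) * zstar j
        ≤ (1/2) * (1 - ∏ i : ι, (1 - q i j)) := hfinal
      _ = ∑ T : ι → Finset κ, (∏ i : ι, m i (T i)) *
          ((1/2) * (1 - ∏ i : ι, (1 - pcMNL v i j (T i)))) := hlhs.symm
      _ ≤ _ := hstep1
  -- assemble
  have hswap : ∑ T : ι → Finset κ, (∏ i : ι, m i (T i)) * expRev (pcMNL v) Q r T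
      = ∑ j : κ, r j * ∑ T : ι → Finset κ, (∏ i : ι, m i (T i)) *
          (∑ A : Finset ι, Q j A *
            ((∏ i ∈ A, pcMNL v i j (T i)) * ∏ i ∈ Aᶜ, (1 - pcMNL v i j (T i)))) := by
    unfold expRev
    have h1 : ∀ T : ι → Finset κ, (∏ i : ι, m i (T i)) *
        (∑ j : κ, r j * ∑ A : Finset ι, Q j A *
          ((∏ i ∈ A, pcMNL v i j (T i)) * ∏ i ∈ Aᶜ, (1 - pcMNL v i j (T i))))
        = ∑ j : κ, r j * ((∏ i : ι, m i (T i)) *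
          ∑ A : Finset ι, Q j A *
            ((∏ i ∈ A, pcMNL v i j (T i)) * ∏ i ∈ Aᶜ, (1 - pcMNL v i j (T i)))) := by
      intro T
      rw [Finset.mul_sum]
      exact Finset.sum_congr rfl fun j _ => by ring
    rw [Finset.sum_congr rfl fun T _ => h1 T, Finset.sum_comm]
    exact Finset.sum_congr rfl fun j _ => by rw [← Finset.mul_sum]
  calc ((1 - (Real.exp 1)⁻¹) / 4) * expRev (pcMNL v) Q r S'
      ≤ ((1 - (Real.exp 1)⁻¹) / 4) * ∑ j : κ, r j * zstar j :=
        mul_le_mul_of_nonneg_left hA hc4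
    _ = ∑ j : κ, r j * (((1 - (Real.exp 1)⁻¹) / 4) * zstar j) := by
        rw [Finset.mul_sum]
        exact Finset.sum_congr rfl fun j _ => by ring
    _ ≤ ∑ j : κ, r j * ∑ T : ι → Finset κ, (∏ i : ι, m i (T i)) *
          (∑ A : Finset ι, Q j A *
            ((∏ i ∈ A, pcMNL v i j (T i)) * ∏ i ∈ Aᶜ, (1 - pcMNL v i j (T i)))) :=
        Finset.sum_le_sum fun j _ =>
          mul_le_mul_of_nonneg_left (hGj j) (hr j)
    _ = ∑ T : ι → Finset κ, (∏ i : ι, m i (T i)) * expRev (pcMNL v) Q r T := hswap.symm
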